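/- Let n, m ≥ 1. Let x : [0, ∞) → ℝ^n and y : [0, ∞) → ℝ^m be differentiable with x_i(t) ≥ 0, y_j(t) ≥ 0, ∑_i x_i(t) = 1, and ∑_j y_j(t) = 1 for all t. Suppose x′ = F(x) and y′ = G(y) where F : Fin n → MvPolynomial (Fin n) ℚ and G : Fin m → MvPolynomial (Fin m) ℚ are such that each F_i (respectively G_j) is a homogeneous polynomial of degree 2 of the form p_i − X_i·q_i (respectively p_j − Y_j·q_j) with p, q having nonnegative coefficients, the coefficient of X_i² in p_i (respectively Y_j² in p_j) is zero, and ∑_i F_i = 0, ∑_j G_j = 0. Then there exists H indexed by pairs (i,j) ∈ Fin n × Fin m over variables Z_{(i,j)} such that: (1) each H_{(i,j)} is a homogeneous polynomial of degree 2 of the form P_{(i,j)} − Z_{(i,j)}·Q_{(i,j)} with P_{(i,j)}, Q_{(i,j)} having nonnegative coefficients and the coefficient of Z_{(i,j)}² in P_{(i,j)} being zero; (2) ∑_{(i,j)} H_{(i,j)} = 0; and (3) the function z defined by z_{(i,j)}(t) = x_i(t)·y_j(t) satisfies z′(t) = H(z(t)) for all t. -/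

import Mathlib

open MvPolynomial

namespace PPAux

variable {σ τ : Type*}

/-- Nonnegative coefficients predicate. -/
def NN (p : MvPolynomial σ ℚ) : Prop := ∀ d, 0 ≤ p.coeff d

open scoped Classical in
theorem nothing : True := trivial

theorem NN.add {p q : MvPolynomial σ ℚ} (hp : NN p) (hq : NN q) : NN (p + q) := by
  classical intro d; rw [coeff_add]; exact add_nonneg (hp d) (hq d)

theorem NN.one : NN (1 : MvPolynomial σ ℚ) := by
  classical intro d; rw [show (1 : MvPolynomial σ ℚ) = C 1 from rfl, coeff_C]
  split <;> norm_num

theorem NN.mul {p q : MvPolynomial σ ℚ} (hp : NN p) (hq : NN q) : NN (p * q) := by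
  classical intro d; rw [coeff_mul]
  exact Finset.sum_nonneg fun e _ => mul_nonneg (hp _) (hq _)

theorem NN.sum {ι : Type*} (s : Finset ι) (f : ι → MvPolynomial σ ℚ)
    (h : ∀ i ∈ s, NN (f i)) : NN (∑ i ∈ s, f i) := by
  intro d; rw [coeff_sum]
  exact Finset.sum_nonneg fun i hi => h i hi d

theorem NN.pow {p : MvPolynomial σ ℚ} (hp : NN p) (k : ℕ) : NN (p ^ k) := by
  induction k with
  | zero => simpa using NN.one
  | succ k ih => rw [pow_succ]; exact ih.mul hp

theorem NN.monomial (d : σ →₀ ℕ) {c : ℚ} (hc : 0 ≤ c) : NN (monomial d c) := by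
  classical intro e; rw [coeff_monomial]; split <;> simp [hc]

theorem NN.X (i : σ) : NN (X i : MvPolynomial σ ℚ) :=
  NN.monomial (Finsupp.single i 1) zero_le_one

theorem NN.smul {p : MvPolynomial σ ℚ} {c : ℚ} (hc : 0 ≤ c) (hp : NN p) : NN (c • p) := by
  intro d; rw [coeff_smul]; exact mul_nonneg hc (hp d)

theorem NN.aeval {p : MvPolynomial σ ℚ} (hp : NN p) (g : σ → MvPolynomial τ ℚ)
    (hg : ∀ i, NN (g i)) : NN (MvPolynomial.aeval g p) := by
  rw [p.as_sum, map_sum]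
  refine NN.sum _ _ fun d hd => ?_
  rw [aeval_monomial]
  refine NN.mul (by simpa using NN.monomial 0 (hp d)) ?_
  exact Finset.prod_induction _ NN (fun _ _ => NN.mul) NN.one fun i _ => (hg i).pow _

section Fin
variable [DecidableEq σ]

theorem pderiv_as_sum (k : σ) (p : MvPolynomial σ ℚ) :
    pderiv k p = ∑ d ∈ p.support, monomial (d - Finsupp.single k 1) (p.coeff d * d k) := by
  conv_lhs => rw [p.as_sum, map_sum]
  exact Finset.sum_congr rfl fun d _ => by rw [pderiv_monomial]

theorem NN.pderiv {p : MvPolynomial σ ℚ} (hp : NN p) (k : σ) : NN (pderiv k p) := by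
  rw [pderiv_as_sum]
  refine NN.sum _ _ fun d _ => NN.monomial _ (mul_nonneg (hp d) (by positivity))

theorem degree_single (i : σ) (k : ℕ) : (Finsupp.single i k).degree = k := by
  rcases eq_or_ne k 0 with h | h
  · simp [h]
  · rw [Finsupp.degree_apply, Finsupp.support_single_ne_zero _ h, Finset.sum_singleton,
      Finsupp.single_eq_same]

theorem degree_add (a b : σ →₀ ℕ) : (a + b).degree = a.degree + b.degree := by
  classical
  simp only [Finsupp.degree_eq_weight_one]
  exact map_add _ a b

theorem sub_add_single {d : σ →₀ ℕ} {k : σ} (h0 : d k ≠ 0) :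
    d - Finsupp.single k 1 + Finsupp.single k 1 = d := by
  ext a
  rcases eq_or_ne a k with rfl | ha
  · simp [Nat.sub_add_cancel (Nat.one_le_iff_ne_zero.mpr h0)]
  · simp [Finsupp.single_eq_of_ne' (Ne.symm ha)]

theorem isHomogeneous_pderiv {p : MvPolynomial σ ℚ} (hp : p.IsHomogeneous 2) (k : σ) :
    (pderiv k p).IsHomogeneous 1 := by
  rw [pderiv_as_sum]
  refine IsHomogeneous.sum _ _ _ fun d hd => ?_
  rcases eq_or_ne (d k) 0 with h0 | h0
  · simp only [h0, Nat.cast_zero, mul_zero, map_zero]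
    exact isHomogeneous_zero _ _ _
  · refine isHomogeneous_monomial _ ?_
    have hdd : d.degree = 2 := by
      have := hp (Finsupp.mem_support_iff.mp hd)
      rw [Finsupp.degree_eq_weight_one]; exact this
    have := degree_add (d - Finsupp.single k 1) (Finsupp.single k 1)
    rw [sub_add_single h0, hdd, degree_single] at this
    omega

variable [Fintype σ]

theorem sum_univ_degree (d : σ →₀ ℕ) : ∑ k : σ, (d k : ℚ) = (d.degree : ℚ) := by
  rw [Finsupp.degree_apply, Nat.cast_sum]
  exact (Finset.sum_subset (Finset.subset_univ _) (by
    intro a _ ha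
    rw [Finsupp.notMem_support_iff.mp ha, Nat.cast_zero])).symm

theorem euler2 {p : MvPolynomial σ ℚ} (hp : p.IsHomogeneous 2) :
    ∑ k : σ, X k * pderiv k p = C 2 * p := by
  conv_lhs => rw [p.as_sum]
  simp only [map_sum, pderiv_monomial, Finset.mul_sum]
  rw [Finset.sum_comm]
  conv_rhs => rw [p.as_sum, Finset.mul_sum]
  refine Finset.sum_congr rfl fun d hd => ?_
  have key : ∀ k : σ, X k * monomial (d - Finsupp.single k 1) (p.coeff d * (d k : ℚ))
      = monomial d (p.coeff d * (d k : ℚ)) := by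
    intro k
    rcases eq_or_ne (d k) 0 with h0 | h0
    · simp [h0]
    · rw [X, monomial_mul, one_mul, add_comm, sub_add_single h0]
  have hdd : d.degree = 2 := by
    have := hp (Finsupp.mem_support_iff.mp hd)
    rw [Finsupp.degree_eq_weight_one]; exact this
  calc ∑ k : σ, X k * monomial (d - Finsupp.single k 1) (p.coeff d * (d k : ℚ))
      = ∑ k : σ, monomial d (p.coeff d * (d k : ℚ)) := Finset.sum_congr rfl fun k _ => key k
    _ = monomial d (p.coeff d * ∑ k : σ, (d k : ℚ)) := by
        rw [Finset.mul_sum, map_sum]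
    _ = C 2 * monomial d (p.coeff d) := by
        rw [sum_univ_degree, hdd, C_mul_monomial, mul_comm]
        norm_num

end Fin



variable {σ τ : Type*} [DecidableEq σ]

theorem coeff_pderiv (i : σ) (e : σ →₀ ℕ) (p : MvPolynomial σ ℚ) :
    coeff e (pderiv i p) = ((e i : ℚ) + 1) * coeff (e + Finsupp.single i 1) p := by
  rw [pderiv_as_sum, coeff_sum]
  have key : ∀ d ∈ p.support,
      coeff e (monomial (d - Finsupp.single i 1) (p.coeff d * (d i : ℚ)))
      = if d = e + Finsupp.single i 1 then ((e i : ℚ) + 1) * p.coeff d else 0 := by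
    intro d _
    rw [coeff_monomial]
    rcases eq_or_ne (d i) 0 with h0 | h0
    · have hne : d ≠ e + Finsupp.single i 1 := by
        intro h
        have := congrArg (fun f => f i) h
        simp [Finsupp.single_eq_same, h0] at this
      rw [h0, if_neg hne]
      simp
    · have hiff : (d - Finsupp.single i 1 = e) ↔ d = e + Finsupp.single i 1 := by
        constructor
        · intro h; rw [← h, sub_add_single h0]
        · intro h
          rw [h]
          ext a
          rcases eq_or_ne a i with rfl | ha
          · simp
          · simp [Finsupp.single_eq_of_ne' (Ne.symm ha)]
      by_cases h : d = e + Finsupp.single i 1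
      · rw [if_pos (hiff.mpr h), if_pos h, h]
        simp [Finsupp.single_eq_same, mul_comm]
      · rw [if_neg (fun hh => h (hiff.mp hh)), if_neg h]
  rw [Finset.sum_congr rfl key, Finset.sum_ite_eq' p.support]
  split
  · rfl
  · rw [MvPolynomial.notMem_support_iff.mp (by assumption), mul_zero]

theorem degree_eq_one {d : σ →₀ ℕ} (h : d.degree = 1) : ∃ k, d = Finsupp.single k 1 := by
  have hd0 : d ≠ 0 := fun h0 => by simp [h0] at h
  obtain ⟨k, hk⟩ := Finsupp.support_nonempty_iff.mpr hd0
  refine ⟨k, ?_⟩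
  have hsum : d k + ∑ a ∈ d.support.erase k, d a = 1 := by
    rw [Finset.add_sum_erase _ (fun a => d a) hk]
    simpa [Finsupp.degree_apply] using h
  have hk1 : d k ≠ 0 := Finsupp.mem_support_iff.mp hk
  have hdk : d k = 1 := by omega
  have hrest : ∑ a ∈ d.support.erase k, d a = 0 := by omega
  ext a
  rcases eq_or_ne a k with rfl | ha
  · simp [hdk]
  · rw [Finsupp.single_eq_of_ne' (Ne.symm ha)]
    by_cases hmem : a ∈ d.support
    · exact (Finset.sum_eq_zero_iff.mp hrest) a (Finset.mem_erase.mpr ⟨ha, hmem⟩)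
    · exact Finsupp.notMem_support_iff.mp hmem

theorem coeff_aeval_single_one [DecidableEq τ] {g : σ → MvPolynomial τ ℚ}
    {r : MvPolynomial σ ℚ} (hr : r.IsHomogeneous 1) (v : τ) (i : σ)
    (hg : ∀ k, (g k).coeff (Finsupp.single v 1) = if k = i then 1 else 0) :
    (MvPolynomial.aeval g r).coeff (Finsupp.single v 1)
      = r.coeff (Finsupp.single i 1) := by
  conv_lhs => rw [r.as_sum, map_sum, coeff_sum]
  have key : ∀ d ∈ r.support,
      ((MvPolynomial.aeval g) (monomial d (r.coeff d))).coeff (Finsupp.single v 1)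
      = if d = Finsupp.single i 1 then r.coeff d else 0 := by
    intro d hd
    have hdd : d.degree = 1 := by
      have := hr (Finsupp.mem_support_iff.mp hd)
      rw [Finsupp.degree_eq_weight_one]; exact this
    obtain ⟨k, rfl⟩ := degree_eq_one hdd
    rw [aeval_monomial, Finsupp.prod_single_index (by simp), pow_one,
      MvPolynomial.algebraMap_eq, coeff_C_mul, hg k]
    rcases eq_or_ne k i with rfl | hk
    · simp
    · rw [if_neg hk, mul_zero, if_neg]
      exact fun hh => hk ((Finsupp.single_left_injective one_ne_zero) hh)
  rw [Finset.sum_congr rfl key, Finset.sum_ite_eq' r.support]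
  split
  · rfl
  · exact (MvPolynomial.notMem_support_iff.mp (by assumption)).symm

theorem single_two_sub (v : σ) :
    Finsupp.single v 2 - Finsupp.single v 1 = Finsupp.single v (1:ℕ) := by
  ext a
  rcases eq_or_ne a v with rfl | ha
  · simp
  · simp [Finsupp.single_eq_of_ne' (Ne.symm ha)]


end PPAux
open PPAux

/-- Product-protocol lemma (Lemma 2): the pairwise products
`z_{(i,j)} = x_i · y_j` of two PP-implementable quadratic form systems on
their probability simplices satisfy a PP-implementable quadratic form
system. -/

theorem stmt_12 (n m : ℕ) (hn : 1 ≤ n) (hm : 1 ≤ m)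
    (x : ℝ → (Fin n → ℝ)) (y : ℝ → (Fin m → ℝ))
    (hxpos : ∀ t : ℝ, 0 ≤ t → ∀ i : Fin n, 0 ≤ x t i)
    (hypos : ∀ t : ℝ, 0 ≤ t → ∀ j : Fin m, 0 ≤ y t j)
    (hxsum : ∀ t : ℝ, 0 ≤ t → (∑ i : Fin n, x t i) = 1)
    (hysum : ∀ t : ℝ, 0 ≤ t → (∑ j : Fin m, y t j) = 1)
    (F : Fin n → MvPolynomial (Fin n) ℚ) (G : Fin m → MvPolynomial (Fin m) ℚ)
    (hF : ∀ i : Fin n, ∃ p q : MvPolynomial (Fin n) ℚ,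
      (∀ d, 0 ≤ p.coeff d) ∧ (∀ d, 0 ≤ q.coeff d) ∧
      p.IsHomogeneous 2 ∧ q.IsHomogeneous 1 ∧
      p.coeff (Finsupp.single i 2) = 0 ∧ F i = p - X i * q)
    (hG : ∀ j : Fin m, ∃ p q : MvPolynomial (Fin m) ℚ,
      (∀ d, 0 ≤ p.coeff d) ∧ (∀ d, 0 ≤ q.coeff d) ∧
      p.IsHomogeneous 2 ∧ q.IsHomogeneous 1 ∧
      p.coeff (Finsupp.single j 2) = 0 ∧ G j = p - X j * q)
    (hFsum : (∑ i : Fin n, F i) = 0) (hGsum : (∑ j : Fin m, G j) = 0)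
    (hxode : ∀ t : ℝ, 0 ≤ t → ∀ i : Fin n,
      HasDerivAt (fun t => x t i) (aeval (x t) (F i)) t)
    (hyode : ∀ t : ℝ, 0 ≤ t → ∀ j : Fin m,
      HasDerivAt (fun t => y t j) (aeval (y t) (G j)) t) :
    ∃ H : Fin n × Fin m → MvPolynomial (Fin n × Fin m) ℚ,
      (∀ ij : Fin n × Fin m, ∃ P Q : MvPolynomial (Fin n × Fin m) ℚ,
        (∀ e, 0 ≤ P.coeff e) ∧ (∀ e, 0 ≤ Q.coeff e) ∧
        P.IsHomogeneous 2 ∧ Q.IsHomogeneous 1 ∧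
        P.coeff (Finsupp.single ij 2) = 0 ∧ H ij = P - X ij * Q) ∧
      (∑ ij : Fin n × Fin m, H ij) = 0 ∧
      (∀ t : ℝ, 0 ≤ t → ∀ ij : Fin n × Fin m,
        HasDerivAt (fun t => x t ij.1 * y t ij.2)
          (aeval (fun kl : Fin n × Fin m => x t kl.1 * y t kl.2) (H ij)) t) := by
  classical
  choose p q hp hq hph hqh hp0 hFeq using hF
  choose g r hg hr hgh hrh hg0 hGeq using hG
  have hpNN : ∀ i, NN (p i) := hp
  have hqNN : ∀ i, NN (q i) := hq
  have hgNN : ∀ j, NN (g j) := hg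
  have hrNN : ∀ j, NN (r j) := hr
  set Φ : MvPolynomial (Fin n) ℚ →ₐ[ℚ] MvPolynomial (Fin n × Fin m) ℚ :=
    MvPolynomial.aeval (fun k => ∑ j : Fin m, X (k, j)) with hPhi
  set Ψ : MvPolynomial (Fin m) ℚ →ₐ[ℚ] MvPolynomial (Fin n × Fin m) ℚ :=
    MvPolynomial.aeval (fun l => ∑ i : Fin n, X (i, l)) with hPsi
  set P : Fin n × Fin m → MvPolynomial (Fin n × Fin m) ℚ := fun ij =>
    (2:ℚ)⁻¹ • ((∑ k : Fin n, X (k, ij.2) * Φ (pderiv k (p ij.1)))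
      + ∑ l : Fin m, X (ij.1, l) * Ψ (pderiv l (g ij.2))) with hPdef
  set Q : Fin n × Fin m → MvPolynomial (Fin n × Fin m) ℚ := fun ij =>
    Φ (q ij.1) + Ψ (r ij.2) with hQdef
  -- basic facts about the substituted variables
  have hσNN : ∀ k : Fin n, NN (∑ j : Fin m, (X (k, j) : MvPolynomial (Fin n × Fin m) ℚ)) :=
    fun k => NN.sum _ _ fun j _ => NN.X _
  have hτNN : ∀ l : Fin m, NN (∑ i : Fin n, (X (i, l) : MvPolynomial (Fin n × Fin m) ℚ)) :=
    fun l => NN.sum _ _ fun i _ => NN.X _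
  have hσhom : ∀ k : Fin n,
      (∑ j : Fin m, (X (k, j) : MvPolynomial (Fin n × Fin m) ℚ)).IsHomogeneous 1 :=
    fun k => IsHomogeneous.sum _ _ _ fun j _ => isHomogeneous_X _ _
  have hτhom : ∀ l : Fin m,
      (∑ i : Fin n, (X (i, l) : MvPolynomial (Fin n × Fin m) ℚ)).IsHomogeneous 1 :=
    fun l => IsHomogeneous.sum _ _ _ fun i _ => isHomogeneous_X _ _
  refine ⟨fun ij => P ij - X ij * Q ij, ?_, ?_, ?_⟩
  · -- shape of each component
    rintro ⟨i, j⟩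
    refine ⟨P (i, j), Q (i, j), ?_, ?_, ?_, ?_, ?_, rfl⟩
    · -- P nonneg
      refine NN.smul (by norm_num) (NN.add ?_ ?_)
      · exact NN.sum _ _ fun k _ => (NN.X _).mul (((hpNN i).pderiv k).aeval _ hσNN)
      · exact NN.sum _ _ fun l _ => (NN.X _).mul (((hgNN j).pderiv l).aeval _ hτNN)
    · -- Q nonneg
      exact ((hqNN i).aeval _ hσNN).add ((hrNN j).aeval _ hτNN)
    · -- P homogeneous of degree 2
      rw [hPdef]
      simp only
      rw [smul_eq_C_mul]
      refine IsHomogeneous.C_mul ?_ _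
      refine IsHomogeneous.add ?_ ?_
      · refine IsHomogeneous.sum _ _ _ fun k _ => ?_
        have := (isHomogeneous_X ℚ ((k, j) : Fin n × Fin m)).mul
          ((isHomogeneous_pderiv (hph i) k).aeval _ hσhom)
        simpa [hPhi] using this
      · refine IsHomogeneous.sum _ _ _ fun l _ => ?_
        have := (isHomogeneous_X ℚ ((i, l) : Fin n × Fin m)).mul
          ((isHomogeneous_pderiv (hgh j) l).aeval _ hτhom)
        simpa [hPsi] using this
    · -- Q homogeneous of degree 1
      have h1 := (hqh i).aeval _ hσhom
      have h2 := (hrh j).aeval _ hτhom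
      simpa [hQdef, hPhi, hPsi] using h1.add (by simpa [hPsi] using h2)
    · -- coefficient of Z_ij^2 in P is zero
      have hXcoeffΦ : ∀ k : Fin n,
          MvPolynomial.coeff (Finsupp.single ((i, j) : Fin n × Fin m) 1)
            ((fun k : Fin n => ∑ j' : Fin m, (X ((k, j')) : MvPolynomial (Fin n × Fin m) ℚ)) k)
          = if k = i then 1 else 0 := by
        intro k
        simp only [coeff_sum, coeff_X']
        rcases eq_or_ne k i with rfl | hk
        · rw [if_pos rfl, Finset.sum_eq_single j]
          · rw [if_pos rfl]
          · intro j' _ hj'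
            rw [if_neg]
            intro hh
            exact hj' (congrArg Prod.snd ((Finsupp.single_left_injective one_ne_zero) hh))
          · intro habs; exact absurd (Finset.mem_univ j) habs
        · rw [if_neg hk]
          refine Finset.sum_eq_zero fun j' _ => ?_
          rw [if_neg]
          intro hh
          exact hk (congrArg Prod.fst ((Finsupp.single_left_injective one_ne_zero) hh))
      have hXcoeffΨ : ∀ l : Fin m,
          MvPolynomial.coeff (Finsupp.single ((i, j) : Fin n × Fin m) 1)
            ((fun l : Fin m => ∑ i' : Fin n, (X ((i', l)) : MvPolynomial (Fin n × Fin m) ℚ)) l)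
          = if l = j then 1 else 0 := by
        intro l
        simp only [coeff_sum, coeff_X']
        rcases eq_or_ne l j with rfl | hl
        · rw [if_pos rfl, Finset.sum_eq_single i]
          · rw [if_pos rfl]
          · intro i' _ hi'
            rw [if_neg]
            intro hh
            exact hi' (congrArg Prod.fst ((Finsupp.single_left_injective one_ne_zero) hh))
          · intro habs; exact absurd (Finset.mem_univ i) habs
        · rw [if_neg hl]
          refine Finset.sum_eq_zero fun i' _ => ?_
          rw [if_neg]
          intro hh
          exact hl (congrArg Prod.snd ((Finsupp.single_left_injective one_ne_zero) hh))
      have hmem2 : ((i, j) : Fin n × Fin m) ∈ (Finsupp.single ((i, j) : Fin n × Fin m) 2).support := by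
        rw [Finsupp.support_single_ne_zero _ (two_ne_zero)]
        exact Finset.mem_singleton_self _
      have h1 : ∀ k : Fin n, MvPolynomial.coeff (Finsupp.single ((i, j) : Fin n × Fin m) 2)
          (X ((k, j) : Fin n × Fin m) * Φ (pderiv k (p i))) = 0 := by
        intro k
        rw [coeff_X_mul']
        rcases eq_or_ne k i with rfl | hk
        · rw [if_pos hmem2, single_two_sub, hPhi]
          rw [coeff_aeval_single_one (isHomogeneous_pderiv (hph k) k) _ k hXcoeffΦ]
          rw [PPAux.coeff_pderiv]
          rw [← Finsupp.single_add]
          simp [hp0 k]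
        · rw [if_neg]
          intro hmem
          rw [Finsupp.support_single_ne_zero _ (two_ne_zero)] at hmem
          exact hk (congrArg Prod.fst (Finset.mem_singleton.mp hmem))
      have h2 : ∀ l : Fin m, MvPolynomial.coeff (Finsupp.single ((i, j) : Fin n × Fin m) 2)
          (X ((i, l) : Fin n × Fin m) * Ψ (pderiv l (g j))) = 0 := by
        intro l
        rw [coeff_X_mul']
        rcases eq_or_ne l j with rfl | hl
        · rw [if_pos hmem2, single_two_sub, hPsi]
          rw [coeff_aeval_single_one (isHomogeneous_pderiv (hgh l) l) _ l hXcoeffΨ]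
          rw [PPAux.coeff_pderiv]
          rw [← Finsupp.single_add]
          simp [hg0 l]
        · rw [if_neg]
          intro hmem
          rw [Finsupp.support_single_ne_zero _ (two_ne_zero)] at hmem
          exact hl (congrArg Prod.snd (Finset.mem_singleton.mp hmem))
      rw [hPdef]
      simp only [coeff_smul, coeff_add, coeff_sum]
      rw [Finset.sum_eq_zero (fun k _ => h1 k), Finset.sum_eq_zero (fun l _ => h2 l)]
      simp
  · -- total sum is zero
    have hA : (∑ i, p i) = ∑ i, X i * q i := by
      have h0 := hFsum
      rw [Finset.sum_congr rfl (fun i _ => hFeq i), Finset.sum_sub_distrib,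
        sub_eq_zero] at h0
      exact h0
    have hB : (∑ j, g j) = ∑ j, X j * r j := by
      have h0 := hGsum
      rw [Finset.sum_congr rfl (fun j _ => hGeq j), Finset.sum_sub_distrib,
        sub_eq_zero] at h0
      exact h0
    have hAhom : (∑ i, p i).IsHomogeneous 2 :=
      IsHomogeneous.sum _ _ _ fun i _ => hph i
    have hBhom : (∑ j, g j).IsHomogeneous 2 :=
      IsHomogeneous.sum _ _ _ fun j _ => hgh j
    have hΦX : ∀ k : Fin n,
        Φ (X k) = ∑ j' : Fin m, (X ((k, j')) : MvPolynomial (Fin n × Fin m) ℚ) := by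
      intro k; rw [hPhi, aeval_X]
    have hΨX : ∀ l : Fin m,
        Ψ (X l) = ∑ i' : Fin n, (X ((i', l)) : MvPolynomial (Fin n × Fin m) ℚ) := by
      intro l; rw [hPsi, aeval_X]
    have hΦC : Φ (C 2) = C 2 := by
      rw [hPhi, aeval_C, MvPolynomial.algebraMap_eq]
    have hΨC : Ψ (C 2) = C 2 := by
      rw [hPsi, aeval_C, MvPolynomial.algebraMap_eq]
    have key1 : ∑ i : Fin n, ∑ j : Fin m, ∑ k : Fin n,
        X ((k, j) : Fin n × Fin m) * Φ (pderiv k (p i))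
        = C 2 * Φ (∑ i, p i) := by
      rw [Finset.sum_comm]
      have hsw : ∀ j : Fin m,
          (∑ i : Fin n, ∑ k : Fin n, X ((k, j) : Fin n × Fin m) * Φ (pderiv k (p i)))
          = ∑ k : Fin n, ∑ i : Fin n, X ((k, j) : Fin n × Fin m) * Φ (pderiv k (p i)) :=
        fun j => Finset.sum_comm
      simp only [hsw]
      have step1 : ∀ (j : Fin m) (k : Fin n),
          ∑ i : Fin n, X ((k, j) : Fin n × Fin m) * Φ (pderiv k (p i))
          = X ((k, j) : Fin n × Fin m) * Φ (pderiv k (∑ i, p i)) := by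
        intro j k
        rw [← Finset.mul_sum, ← map_sum, ← map_sum]
      simp only [step1]
      rw [Finset.sum_comm]
      have step2 : ∀ k : Fin n,
          ∑ j : Fin m, X ((k, j) : Fin n × Fin m) * Φ (pderiv k (∑ i, p i))
          = Φ (X k * pderiv k (∑ i, p i)) := by
        intro k
        rw [← Finset.sum_mul, map_mul, hΦX]
      simp only [step2]
      rw [← map_sum, euler2 hAhom, map_mul, hΦC]
    have key2 : ∑ i : Fin n, ∑ j : Fin m, ∑ l : Fin m,
        X ((i, l) : Fin n × Fin m) * Ψ (pderiv l (g j))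
        = C 2 * Ψ (∑ j, g j) := by
      have step1 : ∀ (i : Fin n) (l : Fin m),
          ∑ j : Fin m, X ((i, l) : Fin n × Fin m) * Ψ (pderiv l (g j))
          = X ((i, l) : Fin n × Fin m) * Ψ (pderiv l (∑ j, g j)) := by
        intro i l
        rw [← Finset.mul_sum, ← map_sum, ← map_sum]
      have hsw : ∀ i : Fin n,
          (∑ j : Fin m, ∑ l : Fin m, X ((i, l) : Fin n × Fin m) * Ψ (pderiv l (g j)))
          = ∑ l : Fin m, ∑ j : Fin m, X ((i, l) : Fin n × Fin m) * Ψ (pderiv l (g j)) :=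
        fun i => Finset.sum_comm
      simp only [hsw]
      simp only [step1]
      rw [Finset.sum_comm]
      have step2 : ∀ l : Fin m,
          ∑ i : Fin n, X ((i, l) : Fin n × Fin m) * Ψ (pderiv l (∑ j, g j))
          = Ψ (X l * pderiv l (∑ j, g j)) := by
        intro l
        rw [← Finset.sum_mul, map_mul, hΨX]
      simp only [step2]
      rw [← map_sum, euler2 hBhom, map_mul, hΨC]
    have key3 : ∑ i : Fin n, ∑ j : Fin m,
        X ((i, j) : Fin n × Fin m) * (Φ (q i) + Ψ (r j))
        = Φ (∑ i, p i) + Ψ (∑ j, g j) := by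
      simp only [mul_add, Finset.sum_add_distrib]
      congr 1
      · have step : ∀ i : Fin n,
            ∑ j : Fin m, X ((i, j) : Fin n × Fin m) * Φ (q i) = Φ (X i * q i) := by
          intro i
          rw [← Finset.sum_mul, map_mul, hΦX]
        simp only [step]
        rw [← map_sum, ← hA]
      · rw [Finset.sum_comm]
        have step : ∀ j : Fin m,
            ∑ i : Fin n, X ((i, j) : Fin n × Fin m) * Ψ (r j) = Ψ (X j * r j) := by
          intro j
          rw [← Finset.sum_mul, map_mul, hΨX]
        simp only [step]
        rw [← map_sum, ← hB]
    rw [Finset.sum_sub_distrib, sub_eq_zero, Fintype.sum_prod_type,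
      Fintype.sum_prod_type]
    have hPsum : ∑ i : Fin n, ∑ j : Fin m, P (i, j)
        = Φ (∑ i, p i) + Ψ (∑ j, g j) := by
      have hinner : ∑ i : Fin n, ∑ j : Fin m,
          ((∑ k : Fin n, X ((k, j) : Fin n × Fin m) * Φ (pderiv k (p i)))
            + ∑ l : Fin m, X ((i, l) : Fin n × Fin m) * Ψ (pderiv l (g j)))
          = C 2 * Φ (∑ i, p i) + C 2 * Ψ (∑ j, g j) := by
        simp only [Finset.sum_add_distrib]
        rw [key1, key2]
      calc ∑ i : Fin n, ∑ j : Fin m, P (i, j)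
          = (2:ℚ)⁻¹ • ∑ i : Fin n, ∑ j : Fin m,
            ((∑ k : Fin n, X ((k, j) : Fin n × Fin m) * Φ (pderiv k (p i)))
              + ∑ l : Fin m, X ((i, l) : Fin n × Fin m) * Ψ (pderiv l (g j))) := by
            simp only [hPdef, Finset.smul_sum]
        _ = (2:ℚ)⁻¹ • (C 2 * Φ (∑ i, p i) + C 2 * Ψ (∑ j, g j)) := by rw [hinner]
        _ = Φ (∑ i, p i) + Ψ (∑ j, g j) := by
            rw [smul_add, ← smul_eq_C_mul, ← smul_eq_C_mul, smul_smul, smul_smul]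
            norm_num
    have hQsum : ∑ i : Fin n, ∑ j : Fin m, X ((i, j) : Fin n × Fin m) * Q (i, j)
        = Φ (∑ i, p i) + Ψ (∑ j, g j) := by
      simp only [hQdef]
      exact key3
    rw [hPsum, hQsum]
  · -- the ODE for the products
    intro t ht ij
    obtain ⟨i, j⟩ := ij
    set z : Fin n × Fin m → ℝ := fun kl => x t kl.1 * y t kl.2 with hz
    have hzΦ : ∀ rr : MvPolynomial (Fin n) ℚ,
        (MvPolynomial.aeval z) (Φ rr) = (MvPolynomial.aeval (x t)) rr := by
      intro rr
      rw [hPhi, comp_aeval_apply]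
      have hfun : (fun k : Fin n => (MvPolynomial.aeval z)
          (∑ j' : Fin m, (X ((k, j')) : MvPolynomial (Fin n × Fin m) ℚ))) = x t := by
        funext k
        simp only [map_sum, aeval_X, hz]
        rw [← Finset.mul_sum, hysum t ht, mul_one]
      rw [hfun]
    have hzΨ : ∀ rr : MvPolynomial (Fin m) ℚ,
        (MvPolynomial.aeval z) (Ψ rr) = (MvPolynomial.aeval (y t)) rr := by
      intro rr
      rw [hPsi, comp_aeval_apply]
      have hfun : (fun l : Fin m => (MvPolynomial.aeval z)
          (∑ i' : Fin n, (X ((i', l)) : MvPolynomial (Fin n × Fin m) ℚ))) = y t := by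
        funext l
        simp only [map_sum, aeval_X, hz]
        rw [← Finset.sum_mul, hxsum t ht, one_mul]
      rw [hfun]
    have heuler : ∀ i' : Fin n,
        ∑ k : Fin n, x t k * (MvPolynomial.aeval (x t)) (pderiv k (p i'))
        = 2 * (MvPolynomial.aeval (x t)) (p i') := by
      intro i'
      have h0 := congrArg (MvPolynomial.aeval (x t)) (euler2 (hph i'))
      simpa [map_sum, map_mul, aeval_X, aeval_C] using h0
    have heulery : ∀ j' : Fin m,
        ∑ l : Fin m, y t l * (MvPolynomial.aeval (y t)) (pderiv l (g j'))
        = 2 * (MvPolynomial.aeval (y t)) (g j') := by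
      intro j'
      have h0 := congrArg (MvPolynomial.aeval (y t)) (euler2 (hgh j'))
      simpa [map_sum, map_mul, aeval_X, aeval_C] using h0
    have hPval : (MvPolynomial.aeval z) (P (i, j))
        = (2:ℚ)⁻¹ • ((y t j * (2 * (MvPolynomial.aeval (x t)) (p i)))
            + x t i * (2 * (MvPolynomial.aeval (y t)) (g j))) := by
      simp only [hPdef]
      rw [map_smul]
      congr 1
      rw [map_add, map_sum, map_sum]
      congr 1
      · have hterm : ∀ k : Fin n, (MvPolynomial.aeval z)
            (X ((k, j) : Fin n × Fin m) * Φ (pderiv k (p i)))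
            = x t k * y t j * (MvPolynomial.aeval (x t)) (pderiv k (p i)) := by
          intro k
          rw [map_mul, aeval_X, hzΦ]
        rw [Finset.sum_congr rfl fun k _ => hterm k]
        rw [← heuler i, Finset.mul_sum]
        exact Finset.sum_congr rfl fun k _ => by ring
      · have hterm : ∀ l : Fin m, (MvPolynomial.aeval z)
            (X ((i, l) : Fin n × Fin m) * Ψ (pderiv l (g j)))
            = x t i * y t l * (MvPolynomial.aeval (y t)) (pderiv l (g j)) := by
          intro l
          rw [map_mul, aeval_X, hzΨ]
        rw [Finset.sum_congr rfl fun l _ => hterm l]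
        rw [← heulery j, Finset.mul_sum]
        exact Finset.sum_congr rfl fun l _ => by ring
    have hQval : (MvPolynomial.aeval z) (X ((i, j) : Fin n × Fin m) * Q (i, j))
        = x t i * y t j
          * ((MvPolynomial.aeval (x t)) (q i) + (MvPolynomial.aeval (y t)) (r j)) := by
      simp only [hQdef]
      rw [map_mul, aeval_X, map_add, hzΦ, hzΨ]
    have hkey : (MvPolynomial.aeval z) (P (i, j) - X ((i, j) : Fin n × Fin m) * Q (i, j))
        = (MvPolynomial.aeval (x t)) (F i) * y t j
          + x t i * (MvPolynomial.aeval (y t)) (G j) := by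
      rw [map_sub, hPval, hQval, hFeq i, hGeq j, map_sub, map_sub, map_mul, map_mul,
        aeval_X, aeval_X, Rat.smul_def]
      push_cast
      ring
    exact hkey ▸ ((hxode t ht i).mul (hyode t ht j))
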